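/- Let p be a prime and r ≥ 1. Let f = (f_1,…,f_r) and g = (g_1,…,g_r) be r-tuples of formal power series in the variables X = (X_1,…,X_r) over Q_p with zero constant terms such that f(g(X)) = X componentwise. Assume that the Jacobian matrix J_g(X) has all entries in Z_p[[X_1,…,X_r]] and that J_g(0) = 1 (the identity matrix). Then for every s ∈ ℕ and all indices i, n_1,…,n_s ∈ {1,…,r}, the iterated partial derivative (∂^s f_i/∂X_{n_1}⋯∂X_{n_s})(0) lies in Z_p. -/

import Mathlib

set_option linter.unusedSectionVars false
set_option linter.unusedVariables false

open MvPowerSeries Finsupp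

/-- Substitution of a tuple `g` of formal power series (each with zero constant term)
into a formal power series `f`. -/
noncomputable def msubst {σ τ : Type*} [Fintype σ] [DecidableEq σ] {R : Type*} [CommRing R]
    (g : σ → MvPowerSeries τ R) (f : MvPowerSeries σ R) : MvPowerSeries τ R :=
  fun d =>
    ∑ e ∈ Finset.Icc (0 : σ →₀ ℕ)
        (Finsupp.equivFunOnFinite.symm fun _ => d.sum fun _ k => k),
      MvPowerSeries.coeff e f * MvPowerSeries.coeff d (∏ s : σ, g s ^ e s)

/-- Formal partial derivative `∂f/∂X_j` of a multivariate formal power series. -/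
noncomputable def pder {R : Type*} [CommSemiring R] {σ : Type*} [DecidableEq σ]
    (j : σ) (f : MvPowerSeries σ R) : MvPowerSeries σ R :=
  fun d => ((d j + 1 : ℕ) : R) * MvPowerSeries.coeff (d + Finsupp.single j 1) f

section Prelim

variable {R : Type*} [CommRing R] {σ : Type*} [DecidableEq σ]

lemma coeff_pder (j : σ) (f : MvPowerSeries σ R) (d : σ →₀ ℕ) :
    MvPowerSeries.coeff d (pder j f) =
      ((d j + 1 : ℕ) : R) * MvPowerSeries.coeff (d + Finsupp.single j 1) f := rfl

lemma sum_antidiagonal_shift (m : σ →₀ ℕ) (j : σ) (F : (σ →₀ ℕ) → (σ →₀ ℕ) → R) :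
    (Finset.HasAntidiagonal.antidiagonal (m + Finsupp.single j 1)).sum
        (fun p : (σ →₀ ℕ) × (σ →₀ ℕ) => (p.1 j : R) * F p.1 p.2)
      = (Finset.HasAntidiagonal.antidiagonal m).sum
        (fun q : (σ →₀ ℕ) × (σ →₀ ℕ) =>
          ((q.1 j + 1 : ℕ) : R) * F (q.1 + Finsupp.single j 1) q.2) := by
  rw [← Finset.sum_filter_of_ne (p := fun p : (σ →₀ ℕ) × (σ →₀ ℕ) => p.1 j ≠ 0)
    (by intro x _ hx h0; apply hx; rw [h0]; simp)]
  refine Finset.sum_nbij' (i := fun p => (p.1 - Finsupp.single j 1, p.2))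
    (j := fun q => (q.1 + Finsupp.single j 1, q.2)) ?_ ?_ ?_ ?_ ?_
  · rintro ⟨u, v⟩ hp
    simp only [Finset.mem_filter, Finset.HasAntidiagonal.mem_antidiagonal] at hp ⊢
    obtain ⟨h1, h2⟩ := hp
    have hle : Finsupp.single j 1 ≤ u := by
      rw [Finsupp.single_le_iff]; omega
    have : (u - Finsupp.single j 1 + v) + Finsupp.single j 1 = m + Finsupp.single j 1 := by
      rw [add_right_comm, tsub_add_cancel_of_le hle, h1]
    exact add_right_cancel this
  · rintro ⟨u, v⟩ hq
    simp only [Finset.HasAntidiagonal.mem_antidiagonal] at hq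
    simp only [Finset.mem_filter, Finset.HasAntidiagonal.mem_antidiagonal]
    constructor
    · rw [add_right_comm, hq]
    · simp
  · rintro ⟨u, v⟩ hp
    simp only [Finset.mem_filter, Finset.HasAntidiagonal.mem_antidiagonal] at hp
    have hle : Finsupp.single j 1 ≤ u := by
      rw [Finsupp.single_le_iff]; omega
    simp [tsub_add_cancel_of_le hle]
  · rintro ⟨u, v⟩ _
    simp
  · rintro ⟨u, v⟩ hp
    simp only [Finset.mem_filter, Finset.HasAntidiagonal.mem_antidiagonal] at hp
    have hle : Finsupp.single j 1 ≤ u := by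
      rw [Finsupp.single_le_iff]; omega
    have h2 : (u - Finsupp.single j 1) + Finsupp.single j 1 = u := tsub_add_cancel_of_le hle
    have h1 : ((u - Finsupp.single j 1 : σ →₀ ℕ)) j + 1 = u j := by
      have := congrArg (fun x : σ →₀ ℕ => x j) h2
      simpa using this
    simp only
    rw [h2]
    congr 1
    rw [← h1]

lemma pder_mul (j : σ) (a b : MvPowerSeries σ R) :
    pder j (a * b) = pder j a * b + a * pder j b := by
  ext d
  rw [map_add, coeff_pder, MvPowerSeries.coeff_mul, MvPowerSeries.coeff_mul,
    MvPowerSeries.coeff_mul, Finset.mul_sum]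
  have key : ∀ p ∈ Finset.HasAntidiagonal.antidiagonal (d + Finsupp.single j 1),
      ((d j + 1 : ℕ) : R) * (MvPowerSeries.coeff p.1 a * MvPowerSeries.coeff p.2 b)
        = (p.1 j : R) * (MvPowerSeries.coeff p.1 a * MvPowerSeries.coeff p.2 b)
          + (p.2 j : R) * (MvPowerSeries.coeff p.1 a * MvPowerSeries.coeff p.2 b) := by
    rintro ⟨u, v⟩ hp
    simp only [Finset.HasAntidiagonal.mem_antidiagonal] at hp
    have huv : u j + v j = d j + 1 := by
      have := congrArg (fun x : σ →₀ ℕ => x j) hp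
      simpa using this
    rw [← add_mul]
    congr 1
    push_cast [← huv]
    ring
  rw [Finset.sum_congr rfl key, Finset.sum_add_distrib]
  congr 1
  · rw [sum_antidiagonal_shift d j (fun u v => MvPowerSeries.coeff u a * MvPowerSeries.coeff v b)]
    refine Finset.sum_congr rfl ?_
    rintro ⟨u, v⟩ hq
    rw [coeff_pder]
    ring
  · have swap1 : (Finset.HasAntidiagonal.antidiagonal (d + Finsupp.single j 1)).sum
        (fun p : (σ →₀ ℕ) × (σ →₀ ℕ) =>
          (p.2 j : R) * (MvPowerSeries.coeff p.1 a * MvPowerSeries.coeff p.2 b))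
        = (Finset.HasAntidiagonal.antidiagonal (d + Finsupp.single j 1)).sum
        (fun p : (σ →₀ ℕ) × (σ →₀ ℕ) =>
          (p.1 j : R) * (MvPowerSeries.coeff p.2 a * MvPowerSeries.coeff p.1 b)) := by
      refine Finset.sum_nbij' (i := Prod.swap) (j := Prod.swap) ?_ ?_ ?_ ?_ ?_ <;>
        simp [Finset.HasAntidiagonal.mem_antidiagonal, add_comm]
    rw [swap1, sum_antidiagonal_shift d j
      (fun u v => MvPowerSeries.coeff v a * MvPowerSeries.coeff u b)]
    refine Finset.sum_nbij' (i := Prod.swap) (j := Prod.swap) ?_ ?_ ?_ ?_ ?_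
    · rintro ⟨u, v⟩ hq; simp only [Finset.HasAntidiagonal.mem_antidiagonal] at hq ⊢; simpa [add_comm] using hq
    · rintro ⟨u, v⟩ hq; simp only [Finset.HasAntidiagonal.mem_antidiagonal] at hq ⊢; simpa [add_comm] using hq
    · rintro ⟨u, v⟩ _; rfl
    · rintro ⟨u, v⟩ _; rfl
    · rintro ⟨u, v⟩ hq
      rw [coeff_pder]
      simp only [Prod.swap]
      ring

end Prelim

section Prelim2

variable {R : Type*} [CommRing R] {σ : Type*} [DecidableEq σ]

lemma pder_add (j : σ) (a b : MvPowerSeries σ R) :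
    pder j (a + b) = pder j a + pder j b := by
  ext d
  simp only [map_add, coeff_pder, mul_add]

lemma pder_one (j : σ) : pder j (1 : MvPowerSeries σ R) = 0 := by
  ext d
  rw [coeff_pder, MvPowerSeries.coeff_one]
  have : d + Finsupp.single j 1 ≠ 0 := by
    intro h
    have := congrArg (fun x : σ →₀ ℕ => x j) h
    simp at this
  rw [if_neg this]
  simp

lemma pder_smul (j : σ) (n : ℕ) (a : MvPowerSeries σ R) :
    pder j (n • a) = n • pder j a := by
  ext d
  simp only [coeff_pder, map_nsmul, smul_eq_mul]
  push_cast
  ring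

lemma pder_pow (j : σ) (a : MvPowerSeries σ R) (n : ℕ) :
    pder j (a ^ (n + 1)) = (n + 1) • (a ^ n * pder j a) := by
  induction n with
  | zero => simp [pder]
  | succ n ih =>
    rw [pow_succ, pder_mul, ih, pow_succ]
    simp only [nsmul_eq_mul]
    push_cast
    ring

lemma pder_prod {ι : Type*} [DecidableEq ι] (j : σ) (s : Finset ι)
    (h : ι → MvPowerSeries σ R) :
    pder j (∏ k ∈ s, h k) = ∑ k ∈ s, (∏ m ∈ s.erase k, h m) * pder j (h k) := by
  induction s using Finset.induction_on with
  | empty => simp [pder_one]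
  | @insert x s hx ih =>
    rw [Finset.prod_insert hx, pder_mul, ih, Finset.sum_insert hx, Finset.mul_sum,
      Finset.erase_insert hx]
    congr 1
    · rw [mul_comm]
    · refine Finset.sum_congr rfl ?_
      intro k hk
      rw [Finset.erase_insert_of_ne (by rintro rfl; exact hx hk), Finset.prod_insert
        (by simp [Finset.mem_erase]; intro _; exact hx)]
      ring

end Prelim2

section FacDeg

variable {σ : Type*} [Fintype σ] [DecidableEq σ]

/-- product of factorials of the entries -/
def fac (e : σ →₀ ℕ) : ℕ := ∏ j, (e j).factorial

/-- total degree -/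
def deg (e : σ →₀ ℕ) : ℕ := ∑ j, e j

lemma fac_zero : fac (0 : σ →₀ ℕ) = 1 := by simp [fac]

lemma fac_ne_zero (e : σ →₀ ℕ) : fac e ≠ 0 :=
  Finset.prod_ne_zero_iff.2 fun j _ => Nat.factorial_ne_zero _

lemma fac_add_single (e : σ →₀ ℕ) (j : σ) :
    fac (e + Finsupp.single j 1) = (e j + 1) * fac e := by
  unfold fac
  rw [← Finset.mul_prod_erase _ _ (Finset.mem_univ j),
      ← Finset.mul_prod_erase _ (fun m => (e m).factorial) (Finset.mem_univ j)]
  have h1 : ((e + Finsupp.single j 1 : σ →₀ ℕ) j) = e j + 1 := by simp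
  have h2 : ∀ m ∈ Finset.univ.erase j,
      ((e + Finsupp.single j 1 : σ →₀ ℕ) m).factorial = (e m).factorial := by
    intro m hm
    have : m ≠ j := (Finset.mem_erase.1 hm).1
    simp [Finsupp.single_apply, this.symm]
  rw [Finset.prod_congr rfl h2, h1, Nat.factorial_succ, mul_assoc]

lemma fac_dvd_of_le {c d : σ →₀ ℕ} (h : c ≤ d) : fac c ∣ fac d :=
  Finset.prod_dvd_prod_of_dvd _ _ fun j _ =>
    Nat.factorial_dvd_factorial (by exact (Finsupp.le_def.1 h) j)

lemma deg_add (a b : σ →₀ ℕ) : deg (a + b) = deg a + deg b := by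
  simp [deg, Finset.sum_add_distrib]

lemma deg_single (j : σ) : deg (Finsupp.single j 1) = 1 := by
  simp [deg, Finsupp.single_apply]

lemma deg_eq_zero_iff (e : σ →₀ ℕ) : deg e = 0 ↔ e = 0 := by
  constructor
  · intro h
    ext j
    have := Finset.sum_eq_zero_iff.1 h j (Finset.mem_univ j)
    simpa using this
  · rintro rfl; simp [deg]

lemma apply_le_deg (e : σ →₀ ℕ) (m : σ) : e m ≤ deg e :=
  Finset.single_le_sum (fun _ _ => Nat.zero_le _) (Finset.mem_univ m)

lemma deg_sum_eq (e : σ →₀ ℕ) : (e.sum fun _ k => k) = deg e := by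
  rw [deg, Finsupp.sum_fintype]
  intro _; rfl

lemma exists_single_of_deg_one {c : σ →₀ ℕ} (h : deg c = 1) :
    ∃ m, c = Finsupp.single m 1 := by
  have hne : c ≠ 0 := by
    intro h0; rw [h0] at h; simp [deg] at h
  obtain ⟨m, hm⟩ := Finsupp.ne_iff.1 hne
  simp only [Finsupp.coe_zero, Pi.zero_apply] at hm
  refine ⟨m, ?_⟩
  have hm1 : c m = 1 := by
    have := apply_le_deg c m
    omega
  ext x
  rcases eq_or_ne x m with rfl | hx
  · simp [hm1]
  · have : c m + ∑ j ∈ Finset.univ.erase m, c j = 1 := by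
      rw [Finset.add_sum_erase _ _ (Finset.mem_univ m)]
      exact h
    have hx0 : c x = 0 := by
      have hxm : x ∈ Finset.univ.erase m := Finset.mem_erase.2 ⟨hx, Finset.mem_univ x⟩
      have h5 := Finset.single_le_sum (f := fun j => c j) (fun _ _ => Nat.zero_le _) hxm
      omega
    simp [hx0, Finsupp.single_apply, Ne.symm hx]

lemma sub_single_add (e : σ →₀ ℕ) (j : σ) (h : e j ≠ 0) :
    e - Finsupp.single j 1 + Finsupp.single j 1 = e :=
  tsub_add_cancel_of_le (Finsupp.single_le_iff.2 (by omega))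

lemma fac_eq_mul_sub_single (e : σ →₀ ℕ) (j : σ) (h : e j ≠ 0) :
    fac e = e j * fac (e - Finsupp.single j 1) := by
  conv_lhs => rw [← sub_single_add e j h]
  rw [fac_add_single]
  congr 1
  have := congrArg (fun x : σ →₀ ℕ => x j) (sub_single_add e j h)
  simpa using this

lemma deg_sub_single (e : σ →₀ ℕ) (j : σ) (h : e j ≠ 0) :
    deg (e - Finsupp.single j 1) + 1 = deg e := by
  conv_rhs => rw [← sub_single_add e j h]
  rw [deg_add, deg_single]

end FacDeg

section Padic

variable {p : ℕ} [Fact p.Prime] {r : ℕ}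

/-- product of powers of the tuple g -/
noncomputable def Pg (g : Fin r → MvPowerSeries (Fin r) ℚ_[p]) (n : Fin r →₀ ℕ) :
    MvPowerSeries (Fin r) ℚ_[p] := ∏ k, g k ^ n k

lemma norm_nat_le_one (n : ℕ) : ‖(n : ℚ_[p])‖ ≤ 1 := by
  have := Padic.norm_int_le_one (p := p) (n : ℤ)
  push_cast at this
  exact this

lemma norm_sum_le_one {ι : Type*} (s : Finset ι) (F : ι → ℚ_[p])
    (h : ∀ x ∈ s, ‖F x‖ ≤ 1) : ‖∑ x ∈ s, F x‖ ≤ 1 := by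
  induction s using Finset.cons_induction_on with
  | empty => simp
  | cons a s ha ih =>
    rw [Finset.sum_cons]
    refine le_trans (Padic.nonarchimedean _ _) (max_le ?_ ?_)
    · exact h _ (Finset.mem_cons_self _ _)
    · exact ih fun x hx => h x (Finset.mem_cons.2 (Or.inr hx))

variable (g : Fin r → MvPowerSeries (Fin r) ℚ_[p])

lemma exists_ne_zero_of_ne_zero {n : Fin r →₀ ℕ} (h : n ≠ 0) : ∃ k, n k ≠ 0 := by
  by_contra hc
  push_neg at hc
  exact h (by ext k; simp [hc k])

lemma Pg_factor (n : Fin r →₀ ℕ) (k : Fin r) (h : n k ≠ 0) :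
    Pg g n = g k * Pg g (n - Finsupp.single k 1) := by
  unfold Pg
  rw [← Finset.mul_prod_erase _ _ (Finset.mem_univ k),
    ← Finset.mul_prod_erase _ (fun m => g m ^ ((n - Finsupp.single k 1 : Fin r →₀ ℕ) m))
      (Finset.mem_univ k)]
  have h1 : ((n - Finsupp.single k 1 : Fin r →₀ ℕ)) k = n k - 1 := by
    rw [Finsupp.tsub_apply]; simp
  have h2 : ∀ m ∈ Finset.univ.erase k,
      g m ^ ((n - Finsupp.single k 1 : Fin r →₀ ℕ) m) = g m ^ (n m) := by
    intro m hm
    have hmk : m ≠ k := (Finset.mem_erase.1 hm).1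
    rw [Finsupp.tsub_apply, Finsupp.single_apply, if_neg (Ne.symm hmk)]
    simp
  rw [Finset.prod_congr rfl h2, h1, ← mul_assoc, ← pow_succ']
  congr 2
  omega

lemma Pg_vanish (hg0 : ∀ i, MvPowerSeries.constantCoeff (g i) = 0) :
    ∀ N (n e : Fin r →₀ ℕ), deg n = N → deg e < deg n →
      MvPowerSeries.coeff e (Pg g n) = 0 := by
  intro N
  induction N using Nat.strong_induction_on with
  | _ N ih =>
    intro n e hN hlt
    have hn0 : n ≠ 0 := by
      intro h0; rw [h0] at hlt; simp [deg] at hlt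
    obtain ⟨k, hk⟩ := exists_ne_zero_of_ne_zero hn0
    rw [Pg_factor g n k hk, MvPowerSeries.coeff_mul]
    refine Finset.sum_eq_zero ?_
    rintro ⟨c1, c2⟩ hc
    simp only [Finset.HasAntidiagonal.mem_antidiagonal] at hc
    rcases eq_or_ne c1 0 with rfl | hc1
    · rw [MvPowerSeries.coeff_zero_eq_constantCoeff, hg0 k, zero_mul]
    · have hdegc : deg c1 + deg c2 = deg e := by rw [← hc, deg_add]
      have hd1 : 1 ≤ deg c1 := by
        rcases Nat.eq_zero_or_pos (deg c1) with h0 | h1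
        · exact absurd ((deg_eq_zero_iff c1).1 h0) hc1
        · exact h1
      have : deg c2 < deg (n - Finsupp.single k 1) := by
        have := deg_sub_single n k hk
        omega
      rw [ih (deg (n - Finsupp.single k 1)) (by have := deg_sub_single n k hk; omega)
        _ _ rfl this, mul_zero]

lemma Pg_top (hg0 : ∀ i, MvPowerSeries.constantCoeff (g i) = 0)
    (hJg0 : ∀ i j, MvPowerSeries.coeff (Finsupp.single j 1) (g i)
      = if i = j then 1 else 0) :
    ∀ N (n e : Fin r →₀ ℕ), deg n = N → deg e = deg n →
      MvPowerSeries.coeff e (Pg g n) = if e = n then 1 else 0 := by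
  intro N
  induction N using Nat.strong_induction_on with
  | _ N ih =>
    intro n e hN hdeg
    rcases eq_or_ne n 0 with rfl | hn0
    · have he : e = 0 := by
        rw [(deg_eq_zero_iff e).1 (by simpa [deg] using hdeg)]
      subst he
      simp [Pg, MvPowerSeries.coeff_one]
    obtain ⟨k, hk⟩ := exists_ne_zero_of_ne_zero hn0
    rw [Pg_factor g n k hk, MvPowerSeries.coeff_mul]
    have hterm : ∀ c ∈ Finset.HasAntidiagonal.antidiagonal e,
        c ≠ (Finsupp.single k 1, e - Finsupp.single k 1) →
        MvPowerSeries.coeff c.1 (g k)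
          * MvPowerSeries.coeff c.2 (Pg g (n - Finsupp.single k 1)) = 0 := by
      rintro ⟨c1, c2⟩ hc hne
      simp only [Finset.HasAntidiagonal.mem_antidiagonal] at hc
      rcases eq_or_ne c1 0 with rfl | hc1
      · rw [MvPowerSeries.coeff_zero_eq_constantCoeff, hg0 k, zero_mul]
      have hdegc : deg c1 + deg c2 = deg e := by rw [← hc, deg_add]
      have hd1 : 1 ≤ deg c1 := by
        rcases Nat.eq_zero_or_pos (deg c1) with h0 | h1
        · exact absurd ((deg_eq_zero_iff c1).1 h0) hc1
        · exact h1
      rcases eq_or_lt_of_le hd1 with hd1' | hd2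
      · -- deg c1 = 1, so c1 = single m 1
        obtain ⟨m, rfl⟩ := exists_single_of_deg_one hd1'.symm
        rcases eq_or_ne m k with rfl | hmk
        · exfalso
          apply hne
          have : c2 = e - Finsupp.single m 1 := by
            rw [← hc]; simp
          rw [this]
        · rw [hJg0 k m, if_neg (Ne.symm hmk), zero_mul]
      · -- deg c1 ≥ 2
        have : deg c2 < deg (n - Finsupp.single k 1) := by
          have := deg_sub_single n k hk
          omega
        rw [Pg_vanish g hg0 (deg (n - Finsupp.single k 1)) _ _ rfl this, mul_zero]
    rcases Nat.eq_zero_or_pos (e k) with hek | hek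
    · -- e k = 0 : whole sum is zero, and e ≠ n
      have hsum : ∀ c ∈ Finset.HasAntidiagonal.antidiagonal e,
          MvPowerSeries.coeff c.1 (g k)
            * MvPowerSeries.coeff c.2 (Pg g (n - Finsupp.single k 1)) = 0 := by
        intro c hc
        refine hterm c hc ?_
        rintro rfl
        simp only [Finset.HasAntidiagonal.mem_antidiagonal] at hc
        have := congrArg (fun x : Fin r →₀ ℕ => x k) hc
        simp only [Finsupp.add_apply, Finsupp.tsub_apply, Finsupp.single_eq_same] at this
        omega
      rw [Finset.sum_eq_zero hsum, if_neg (by rintro rfl; exact hk hek)]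
    · -- e k ≥ 1
      have hmem : (Finsupp.single k 1, e - Finsupp.single k 1) ∈ Finset.HasAntidiagonal.antidiagonal e := by
        rw [Finset.HasAntidiagonal.mem_antidiagonal]
        exact add_tsub_cancel_of_le (Finsupp.single_le_iff.2 hek)
      rw [Finset.sum_eq_single_of_mem _ hmem hterm, hJg0 k k, if_pos rfl, one_mul]
      have hdegs : deg (e - Finsupp.single k 1) = deg (n - Finsupp.single k 1) := by
        have h1 := deg_sub_single e k (by omega)
        have h2 := deg_sub_single n k hk
        omega
      rw [ih (deg (n - Finsupp.single k 1)) (by have := deg_sub_single n k hk; omega)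
        _ _ rfl hdegs]
      have hiff : (e - Finsupp.single k 1 = n - Finsupp.single k 1) ↔ e = n := by
        constructor
        · intro hsub
          have := congrArg (fun x => x + Finsupp.single k 1) hsub
          rwa [sub_single_add e k (by omega), sub_single_add n k hk] at this
        · intro h; rw [h]
      by_cases hen : e = n
      · rw [if_pos (hiff.2 hen), if_pos hen]
      · rw [if_neg (fun h => hen (hiff.1 h)), if_neg hen]

end Padic

section Padic2

variable {p : ℕ} [Fact p.Prime] {r : ℕ} (g : Fin r → MvPowerSeries (Fin r) ℚ_[p])

lemma coeff_pder_sub (j : Fin r) (a : MvPowerSeries (Fin r) ℚ_[p]) (e : Fin r →₀ ℕ)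
    (hj : e j ≠ 0) :
    MvPowerSeries.coeff (e - Finsupp.single j 1) (pder j a)
      = (e j : ℚ_[p]) * MvPowerSeries.coeff e a := by
  rw [coeff_pder, sub_single_add e j hj]
  congr 2
  have : ((e - Finsupp.single j 1 : Fin r →₀ ℕ)) j = e j - 1 := by
    rw [Finsupp.tsub_apply]; simp
  omega

lemma pder_Pg (j : Fin r) (n : Fin r →₀ ℕ) :
    pder j (Pg g n)
      = ∑ k, (n k) • (Pg g (n - Finsupp.single k 1) * pder j (g k)) := by
  unfold Pg
  rw [pder_prod]
  refine Finset.sum_congr rfl ?_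
  intro k _
  rcases Nat.eq_zero_or_pos (n k) with h0 | hpos
  · rw [h0, pow_zero, pder_one, mul_zero, zero_smul]
  · obtain ⟨t, ht⟩ : ∃ t, n k = t + 1 := ⟨n k - 1, by omega⟩
    rw [ht, pder_pow, mul_smul_comm]
    have hPg : (∏ m, g m ^ ((n - Finsupp.single k 1 : Fin r →₀ ℕ) m))
        = g k ^ t * ∏ m ∈ Finset.univ.erase k, g m ^ (n m) := by
      rw [← Finset.mul_prod_erase _ (fun m => g m ^ ((n - Finsupp.single k 1 : Fin r →₀ ℕ) m))
        (Finset.mem_univ k)]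
      have h1 : ((n - Finsupp.single k 1 : Fin r →₀ ℕ)) k = t := by
        rw [Finsupp.tsub_apply]; simp [ht]
      have h2 : ∀ m ∈ Finset.univ.erase k,
          g m ^ ((n - Finsupp.single k 1 : Fin r →₀ ℕ) m) = g m ^ (n m) := by
        intro m hm
        have hmk : m ≠ k := (Finset.mem_erase.1 hm).1
        rw [Finsupp.tsub_apply, Finsupp.single_apply, if_neg (Ne.symm hmk)]
        simp
      rw [Finset.prod_congr rfl h2, h1]
    rw [hPg]
    congr 1
    ring

lemma Pg_norm (hg0 : ∀ i, MvPowerSeries.constantCoeff (g i) = 0)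
    (hJg_int : ∀ (i j : Fin r) (d : Fin r →₀ ℕ),
      ‖MvPowerSeries.coeff d (pder j (g i))‖ ≤ 1) :
    ∀ N (n : Fin r →₀ ℕ), deg n = N → ∀ e,
      ‖(fac e : ℚ_[p]) / (fac n : ℚ_[p]) * MvPowerSeries.coeff e (Pg g n)‖ ≤ 1 := by
  intro N
  induction N using Nat.strong_induction_on with
  | _ N ih =>
    intro n hN e
    rcases eq_or_ne n 0 with rfl | hn0
    · have : Pg g 0 = 1 := by simp [Pg]
      rw [this, MvPowerSeries.coeff_one, fac_zero]
      rcases eq_or_ne e 0 with rfl | he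
      · simp [fac_zero]
      · simp [if_neg he]
    rcases eq_or_ne e 0 with rfl | he0
    · have hc0 : MvPowerSeries.coeff 0 (Pg g n) = 0 := by
        obtain ⟨k, hk⟩ := exists_ne_zero_of_ne_zero hn0
        rw [MvPowerSeries.coeff_zero_eq_constantCoeff]
        unfold Pg
        rw [map_prod]
        refine Finset.prod_eq_zero (Finset.mem_univ k) ?_
        rw [map_pow, hg0 k, zero_pow hk]
      rw [hc0, mul_zero, norm_zero]
      exact zero_le_one
    -- main case
    obtain ⟨j, hj⟩ := exists_ne_zero_of_ne_zero he0
    have hkey : (e j : ℚ_[p]) * MvPowerSeries.coeff e (Pg g n)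
        = ∑ k, (n k : ℚ_[p]) *
            ∑ c ∈ Finset.HasAntidiagonal.antidiagonal (e - Finsupp.single j 1),
              MvPowerSeries.coeff c.1 (Pg g (n - Finsupp.single k 1))
                * MvPowerSeries.coeff c.2 (pder j (g k)) := by
      rw [← coeff_pder_sub j (Pg g n) e hj, pder_Pg, map_sum]
      refine Finset.sum_congr rfl ?_
      intro k _
      rw [map_nsmul, nsmul_eq_mul, MvPowerSeries.coeff_mul]
    have hej : (e j : ℚ_[p]) ≠ 0 := by
      exact_mod_cast (Nat.cast_ne_zero (R := ℚ_[p])).2 hj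
    have hT : (fac e : ℚ_[p]) / (fac n : ℚ_[p]) * MvPowerSeries.coeff e (Pg g n)
        = ∑ k, ∑ c ∈ Finset.HasAntidiagonal.antidiagonal (e - Finsupp.single j 1),
            (fac e : ℚ_[p]) / (fac n : ℚ_[p]) * (e j : ℚ_[p])⁻¹ *
              ((n k : ℚ_[p]) *
                (MvPowerSeries.coeff c.1 (Pg g (n - Finsupp.single k 1))
                  * MvPowerSeries.coeff c.2 (pder j (g k)))) := by
      have : MvPowerSeries.coeff e (Pg g n)
          = (e j : ℚ_[p])⁻¹ * ((e j : ℚ_[p]) * MvPowerSeries.coeff e (Pg g n)) := by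
        rw [← mul_assoc, inv_mul_cancel₀ hej, one_mul]
      rw [this, hkey]
      simp only [Finset.mul_sum]
      exact Finset.sum_congr rfl fun k _ => Finset.sum_congr rfl fun c _ => by ring
    rw [hT]
    refine norm_sum_le_one _ _ ?_
    intro k _
    refine norm_sum_le_one _ _ ?_
    intro c hc
    rcases Nat.eq_zero_or_pos (n k) with hnk | hnk
    · simp [hnk]
    -- n k ≥ 1
    have hc1le : c.1 ≤ e - Finsupp.single j 1 := by
      rw [Finset.HasAntidiagonal.mem_antidiagonal] at hc
      exact le_of_add_le_left (le_of_eq hc)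
    obtain ⟨t, ht⟩ := fac_dvd_of_le hc1le
    have hfe : (fac e : ℚ_[p]) = (e j : ℚ_[p]) * (fac (e - Finsupp.single j 1) : ℚ_[p]) := by
      exact_mod_cast congrArg (Nat.cast (R := ℚ_[p])) (fac_eq_mul_sub_single e j hj)
    have hfn : (fac n : ℚ_[p]) = (n k : ℚ_[p]) * (fac (n - Finsupp.single k 1) : ℚ_[p]) := by
      exact_mod_cast congrArg (Nat.cast (R := ℚ_[p]))
        (fac_eq_mul_sub_single n k (by omega))
    have hscal : (fac e : ℚ_[p]) / (fac n : ℚ_[p]) * (e j : ℚ_[p])⁻¹ *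
          ((n k : ℚ_[p]) *
            (MvPowerSeries.coeff c.1 (Pg g (n - Finsupp.single k 1))
              * MvPowerSeries.coeff c.2 (pder j (g k))))
        = (t : ℚ_[p]) *
            ((fac c.1 : ℚ_[p]) / (fac (n - Finsupp.single k 1) : ℚ_[p])
              * MvPowerSeries.coeff c.1 (Pg g (n - Finsupp.single k 1)))
            * MvPowerSeries.coeff c.2 (pder j (g k)) := by
      have hnk' : (n k : ℚ_[p]) ≠ 0 := by
        exact_mod_cast (Nat.cast_ne_zero (R := ℚ_[p])).2 (by omega)
      have hfnd : (fac (n - Finsupp.single k 1) : ℚ_[p]) ≠ 0 := by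
        exact_mod_cast fac_ne_zero _
      have hft : (fac (e - Finsupp.single j 1) : ℚ_[p])
          = (fac c.1 : ℚ_[p]) * (t : ℚ_[p]) := by exact_mod_cast congrArg Nat.cast ht
      rw [hfe, hfn]
      field_simp
      ring_nf
      rw [hft]
      ring
    rw [hscal]
    have hdlt : deg (n - Finsupp.single k 1) < N := by
      have := deg_sub_single n k (by omega)
      omega
    rw [norm_mul, norm_mul]
    have h1 : ‖(t : ℚ_[p])‖ ≤ 1 := norm_nat_le_one t
    have h2 : ‖(fac c.1 : ℚ_[p]) / (fac (n - Finsupp.single k 1) : ℚ_[p])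
        * MvPowerSeries.coeff c.1 (Pg g (n - Finsupp.single k 1))‖ ≤ 1 :=
      ih _ hdlt _ rfl c.1
    have h3 := hJg_int k j c.2
    refine mul_le_one₀ (mul_le_one₀ h1 (norm_nonneg _) h2) (norm_nonneg _) h3

end Padic2

section Main

variable {p : ℕ} [Fact p.Prime] {r : ℕ} (g : Fin r → MvPowerSeries (Fin r) ℚ_[p])

lemma coeff_msubst (f : MvPowerSeries (Fin r) ℚ_[p]) (d : Fin r →₀ ℕ) :
    MvPowerSeries.coeff d (msubst g f)
      = ∑ e ∈ Finset.Icc (0 : Fin r →₀ ℕ)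
          (Finsupp.equivFunOnFinite.symm fun _ => d.sum fun _ k => k),
        MvPowerSeries.coeff e f * MvPowerSeries.coeff d (Pg g e) := rfl

lemma coeff_f_int (hg0 : ∀ i, MvPowerSeries.constantCoeff (g i) = 0)
    (hJg_int : ∀ (i j : Fin r) (d : Fin r →₀ ℕ),
      ‖MvPowerSeries.coeff d (pder j (g i))‖ ≤ 1)
    (hJg0 : ∀ i j, MvPowerSeries.coeff (Finsupp.single j 1) (g i)
      = if i = j then 1 else 0)
    (F : MvPowerSeries (Fin r) ℚ_[p])
    (hF0 : MvPowerSeries.constantCoeff F = 0) (i : Fin r)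
    (hFg : msubst g F = MvPowerSeries.X i) :
    ∀ N (e : Fin r →₀ ℕ), deg e = N →
      ‖(fac e : ℚ_[p]) * MvPowerSeries.coeff e F‖ ≤ 1 := by
  intro N
  induction N using Nat.strong_induction_on with
  | _ N ih =>
    intro e hdeg
    rcases eq_or_ne e 0 with rfl | he0
    · rw [MvPowerSeries.coeff_zero_eq_constantCoeff]
      simp [hF0]
    have hsum := congrArg (MvPowerSeries.coeff e) hFg
    rw [coeff_msubst] at hsum
    set B : Fin r →₀ ℕ := Finsupp.equivFunOnFinite.symm fun _ => e.sum fun _ k => k with hB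
    have hmem : e ∈ Finset.Icc (0 : Fin r →₀ ℕ) B := by
      rw [Finset.mem_Icc]
      refine ⟨(zero_le : 0 ≤ e), ?_⟩
      rw [Finsupp.le_def]
      intro m
      have : B m = deg e := by
        rw [hB, deg_sum_eq]
        simp [Finsupp.equivFunOnFinite]
        rfl
      rw [this]
      exact apply_le_deg e m
    rw [← Finset.add_sum_erase _ _ hmem] at hsum
    rw [Pg_top g hg0 hJg0 (deg e) e e rfl rfl, if_pos rfl, mul_one] at hsum
    have hF : MvPowerSeries.coeff e F
        = MvPowerSeries.coeff e (MvPowerSeries.X i)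
          - ∑ e' ∈ (Finset.Icc (0 : Fin r →₀ ℕ) B).erase e,
              MvPowerSeries.coeff e' F * MvPowerSeries.coeff e (Pg g e') := by
      rw [← hsum]; ring
    rw [hF, mul_sub, sub_eq_add_neg]
    refine le_trans (Padic.nonarchimedean _ _) (max_le ?_ ?_)
    · rw [MvPowerSeries.coeff_X]
      rcases eq_or_ne e (Finsupp.single i 1) with rfl | hne
      · rw [if_pos rfl, mul_one]
        exact norm_nat_le_one _
      · rw [if_neg hne, mul_zero, norm_zero]
        exact zero_le_one
    · rw [norm_neg, Finset.mul_sum]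
      refine norm_sum_le_one _ _ ?_
      intro e' he'
      have hne : e' ≠ e := (Finset.mem_erase.1 he').1
      rcases lt_trichotomy (deg e') (deg e) with hlt | heq | hgt
      · have hkey : (fac e : ℚ_[p]) *
            (MvPowerSeries.coeff e' F * MvPowerSeries.coeff e (Pg g e'))
            = ((fac e' : ℚ_[p]) * MvPowerSeries.coeff e' F)
              * ((fac e : ℚ_[p]) / (fac e' : ℚ_[p]) * MvPowerSeries.coeff e (Pg g e')) := by
          have hne0 : (fac e' : ℚ_[p]) ≠ 0 := by exact_mod_cast fac_ne_zero e'
          field_simp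
        rw [hkey, norm_mul]
        refine mul_le_one₀ (ih _ (by omega) e' rfl) (norm_nonneg _)
          (Pg_norm g hg0 hJg_int (deg e') e' rfl e)
      · rw [Pg_top g hg0 hJg0 (deg e') e' e rfl heq.symm, if_neg (Ne.symm hne), mul_zero, mul_zero,
          norm_zero]
        exact zero_le_one
      · rw [Pg_vanish g hg0 (deg e') e' e rfl hgt, mul_zero, mul_zero, norm_zero]
        exact zero_le_one

lemma foldl_pder_coeff :
    ∀ (L : List (Fin r)) (h : MvPowerSeries (Fin r) ℚ_[p]) (d : Fin r →₀ ℕ),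
      (fac d : ℚ_[p]) * MvPowerSeries.coeff d (L.foldl (fun h j => pder j h) h)
        = (fac (d + (L.map fun j => Finsupp.single j 1).sum) : ℚ_[p])
            * MvPowerSeries.coeff (d + (L.map fun j => Finsupp.single j 1).sum) h := by
  intro L
  induction L with
  | nil => intro h d; simp
  | cons j L ihL =>
    intro h d
    rw [List.foldl_cons, ihL (pder j h) d, coeff_pder]
    set E := (L.map fun j => Finsupp.single j 1).sum with hE
    have hidx : d + ((List.map (fun j => Finsupp.single j 1) (j :: L)).sum)
        = (d + E) + Finsupp.single j 1 := by
      rw [List.map_cons, List.sum_cons, hE]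
      rw [add_comm (Finsupp.single j 1) E, ← add_assoc]
    rw [hidx, fac_add_single]
    push_cast
    ring

end Main

/-- If `f, g` are `r`-tuples of power series over `ℚ_p` with zero constant
term, `f(g(X)) = X`, `J_g` has entries in `ℤ_p[[X]]` and `J_g(0) = 1`, then all iterated
partial derivatives of the components of `f` at `0` lie in `ℤ_p`. -/
theorem iterated_pderiv_at_zero_int_of_left_inverse
    {p : ℕ} [Fact p.Prime] {r : ℕ} (hr : 1 ≤ r)
    (f g : Fin r → MvPowerSeries (Fin r) ℚ_[p])
    (hf0 : ∀ i, MvPowerSeries.constantCoeff (f i) = 0)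
    (hg0 : ∀ i, MvPowerSeries.constantCoeff (g i) = 0)
    (hfg : ∀ i, msubst g (f i) = MvPowerSeries.X i)
    (hJg_int : ∀ (i j : Fin r) (d : Fin r →₀ ℕ),
      ‖MvPowerSeries.coeff d (pder j (g i))‖ ≤ 1)
    (hJg0 : ∀ i j, MvPowerSeries.coeff (Finsupp.single j 1) (g i)
      = if i = j then 1 else 0) :
    ∀ (s : ℕ) (i : Fin r) (ns : Fin s → Fin r),
      ‖MvPowerSeries.constantCoeff
        ((List.ofFn ns).foldl (fun h j => pder j h) (f i))‖ ≤ 1 := by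
  intro s i ns
  rw [← MvPowerSeries.coeff_zero_eq_constantCoeff]
  have hb := foldl_pder_coeff (List.ofFn ns) (f i) 0
  rw [fac_zero, Nat.cast_one, one_mul, zero_add] at hb
  rw [hb]
  exact coeff_f_int g hg0 hJg_int hJg0 (f i) (hf0 i) i (hfg i) _ _ rfl
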